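/- For every y ∈ ℤ: U_{μ^{Root}_T}(y) = E_y[U_{μ^{Root}}(Y_{τ*}) 1_{τ* < T} + U_λ(Y_{τ*}) 1_{τ* = T}], where E_y denotes expectation for Y started at Y_0 = y. -/

import Mathlib

open MeasureTheory ProbabilityTheory

noncomputable section

namespace SwitchingIdentities

variable {Ω : Type*} [MeasurableSpace Ω]

/-- The increment `ξ` has the fair `±1` law. -/
def FairSign (P : Measure Ω) (ξ : Ω → ℤ) : Prop :=
  P {ω | ξ ω = 1} = 1 / 2 ∧ P {ω | ξ ω = -1} = 1 / 2

/-- `ξ` and `η` are the increment families of two independent simple symmetric random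
walks on `ℤ`: all increments are measurable, fair `±1` coins, and the whole family
`(ξ₀, ξ₁, …, η₀, η₁, …)` is independent. -/
def IndepSSRWIncrements (P : Measure Ω) (ξ η : ℕ → Ω → ℤ) : Prop :=
  (∀ n, Measurable (ξ n)) ∧ (∀ n, Measurable (η n)) ∧
  (∀ n, FairSign P (ξ n)) ∧ (∀ n, FairSign P (η n)) ∧
  iIndepFun (Sum.elim ξ η) P

/-- The random walk with increments `ξ` started at `x`. -/
def walk (ξ : ℕ → Ω → ℤ) (x : ℤ) (t : ℕ) (ω : Ω) : ℤ :=
  x + ∑ i ∈ Finset.range t, ξ i ω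

/-- A Root continuation set: if `(t,m) ∈ D` then `(s,m) ∈ D` for all `s < t`. -/
def IsRootCont {α : Type*} (D : Set (ℕ × α)) : Prop :=
  ∀ t m, (t, m) ∈ D → ∀ s, s < t → (s, m) ∈ D

/-- A Rost continuation set: if `(t,m) ∈ D` then `(s,m) ∈ D` for all `s > t`. -/
def IsRostCont {α : Type*} (D : Set (ℕ × α)) : Prop :=
  ∀ t m, (t, m) ∈ D → ∀ s, t < s → (s, m) ∈ D

/-- `hit D Z ω = inf {t : (t, Z_t) ∉ D}` (junk value `0` if the walk never leaves `D`). -/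
def hit {α : Type*} (D : Set (ℕ × α)) (Z : ℕ → Ω → α) (ω : Ω) : ℕ :=
  sInf {t | (t, Z t ω) ∉ D}

/-- `hitBy D Z n ω = inf {t : (t, Z_t) ∉ D} ∧ n` (equal to `n` if the walk never leaves `D`). -/
def hitBy {α : Type*} (D : Set (ℕ × α)) (Z : ℕ → Ω → α) (n : ℕ) (ω : Ω) : ℕ :=
  sInf ({t | (t, Z t ω) ∉ D} ∪ {n})

/-- `revHitBy D Z T ω = inf {t : (T − t, Z_t) ∉ D} ∧ T`, the exit time of the time-reversed
space-time walk, capped at `T`. -/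
def revHitBy {α : Type*} (D : Set (ℕ × α)) (Z : ℕ → Ω → α) (T : ℕ) (ω : Ω) : ℕ :=
  sInf ({t | (T - t, Z t ω) ∉ D} ∪ {T})

/-- The potential function `U_m(z) = −∑_x |z − x| m({x})` of a measure `m` on `ℤ`. -/
def potential (m : Measure ℤ) (z : ℤ) : ℝ :=
  -∑' w : ℤ, (|z - w| : ℤ) * (m {w}).toReal

/-- A measure on `ℤ` has a finite first moment. -/
def FiniteFirstMoment (m : Measure ℤ) : Prop :=
  Integrable (fun z : ℤ => (z : ℝ)) m

/-- `τ` is a stopping time of the natural filtration of the process `Z`: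
`{τ ≤ n} ∈ σ(Z_0, …, Z_n)` for every `n`. -/
def IsNatStopping {α : Type*} [MeasurableSpace α] (Z : ℕ → Ω → α) (τ : Ω → ℕ) : Prop :=
  ∀ n : ℕ,
    MeasurableSet[MeasurableSpace.comap (fun ω => (fun i : Fin (n + 1) => Z i ω)) inferInstance]
      {ω | τ ω ≤ n}

/-- The law `μ^{Root}` of `X_{ρ^{Root}}` where `X` has increments `ξ` and `X_0 ∼ λ`. -/
def muRoot (P : Measure Ω) (ξ : ℕ → Ω → ℤ) (D : Set (ℕ × ℤ)) (lam : Measure ℤ) : Measure ℤ :=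
  Measure.map (fun p : ℤ × Ω => walk ξ p.1 (hit D (walk ξ p.1) p.2) p.2) (lam.prod P)

/-- The law `μ^{Root}_T` of `X_{ρ^{Root} ∧ T}` where `X` has increments `ξ` and `X_0 ∼ λ`. -/
def muRootT (P : Measure Ω) (ξ : ℕ → Ω → ℤ) (D : Set (ℕ × ℤ)) (lam : Measure ℤ) (T : ℕ) :
    Measure ℤ :=
  Measure.map (fun p : ℤ × Ω => walk ξ p.1 (hitBy D (walk ξ p.1) T p.2) p.2) (lam.prod P)


section Helpers

variable {Ω : Type*} [MeasurableSpace Ω]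

/-! ### Nat sInf helpers -/

lemma sInf_eq_of (S : Set ℕ) {n : ℕ} (hn : n ∈ S) (hlt : ∀ m < n, m ∉ S) : sInf S = n :=
  le_antisymm (Nat.sInf_le hn) (le_of_not_gt fun h => hlt _ h (Nat.sInf_mem ⟨n, hn⟩))

lemma sInf_eq_iff_of_nonempty {S : Set ℕ} (hS : S.Nonempty) {n : ℕ} :
    sInf S = n ↔ n ∈ S ∧ ∀ m < n, m ∉ S :=
  ⟨fun h => h ▸ ⟨Nat.sInf_mem hS, fun m hm => Nat.notMem_of_lt_sInf (h ▸ hm)⟩,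
   fun h => sInf_eq_of _ h.1 h.2⟩

lemma sInf_shift {S : Set ℕ} (hS : S.Nonempty) (h0 : (0:ℕ) ∉ S) :
    sInf S = sInf {n | n + 1 ∈ S} + 1 := by
  obtain ⟨k, hk⟩ := hS
  obtain ⟨j, rfl⟩ : ∃ j, k = j + 1 := by
    rcases Nat.eq_zero_or_pos k with h | h
    · exact absurd (h ▸ hk) h0
    · exact ⟨k - 1, by omega⟩
  have hS' : {n | n + 1 ∈ S}.Nonempty := ⟨j, hk⟩
  apply sInf_eq_of
  · exact Nat.sInf_mem hS'
  · rintro (_ | m) hm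
    · exact h0
    · intro hmem
      exact Nat.notMem_of_lt_sInf (s := {n | n + 1 ∈ S}) (by omega) hmem

lemma sInf_union_le (S : Set ℕ) (T : ℕ) : sInf (S ∪ {T}) ≤ T :=
  Nat.sInf_le (Or.inr rfl)

lemma sInf_union_congr_aux {S₁ S₂ : Set ℕ} {T : ℕ} (h : ∀ t ≤ T, t ∈ S₁ → t ∈ S₂) :
    sInf (S₂ ∪ {T}) ≤ sInf (S₁ ∪ {T}) := by
  have hne : (S₁ ∪ {T}).Nonempty := ⟨T, Or.inr rfl⟩
  rcases Nat.sInf_mem hne with hmem | hmem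
  · exact Nat.sInf_le (Or.inl (h _ (sInf_union_le S₁ T) hmem))
  · rw [Set.mem_singleton_iff] at hmem
    rw [hmem]; exact sInf_union_le S₂ T

lemma sInf_union_congr {S₁ S₂ : Set ℕ} {T : ℕ} (h : ∀ t ≤ T, t ∈ S₁ ↔ t ∈ S₂) :
    sInf (S₁ ∪ {T}) = sInf (S₂ ∪ {T}) :=
  le_antisymm (sInf_union_congr_aux fun t ht hm => (h t ht).2 hm)
    (sInf_union_congr_aux fun t ht hm => (h t ht).1 hm)

/-! ### abs identity -/

lemma abs_step (w y : ℤ) : |w + 1 - y| + |w - 1 - y| = 2 * |w - y| + (if w = y then 2 else 0) := by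
  rcases lt_trichotomy w y with h | h | h
  · rw [if_neg h.ne, abs_of_nonpos (by omega), abs_of_nonpos (by omega),
      abs_of_nonpos (by omega)]
    ring
  · subst h
    rw [if_pos rfl, abs_of_nonneg (by omega), abs_of_nonpos (by omega), abs_of_nonneg (by omega)]
    ring
  · rw [if_neg h.ne', abs_of_nonneg (by omega), abs_of_nonneg (by omega),
      abs_of_nonneg (by omega)]
    ring

lemma abs_abs_sub_abs_le (a b z : ℤ) : |(|a - z|) - (|b - z|)| ≤ |a - b| := by
  have h3 := abs_abs_sub_abs_le_abs_sub (a - z) (b - z)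
  have h4 : (a - z) - (b - z) = a - b := by ring
  rwa [h4] at h3

/-! ### walk lemmas -/

lemma walk_zero (ξ : ℕ → Ω → ℤ) (x : ℤ) (ω : Ω) : walk ξ x 0 ω = x := by simp [walk]

lemma walk_succ (ξ : ℕ → Ω → ℤ) (x : ℤ) (t : ℕ) (ω : Ω) :
    walk ξ x (t + 1) ω = walk ξ x t ω + ξ t ω := by
  simp [walk, Finset.sum_range_succ, add_assoc]

lemma walk_bound {ξ : ℕ → Ω → ℤ} {ω : Ω} (hω : ∀ i, ξ i ω = 1 ∨ ξ i ω = -1) (x : ℤ) (t : ℕ) :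
    |walk ξ x t ω - x| ≤ (t : ℤ) := by
  induction t with
  | zero => simp [walk_zero]
  | succ t ih =>
    have h1 : |ξ t ω| ≤ 1 := by rcases hω t with h | h <;> simp [h]
    have h2 : walk ξ x (t + 1) ω - x = (walk ξ x t ω - x) + ξ t ω := by
      rw [walk_succ]; ring
    rw [h2]
    calc |(walk ξ x t ω - x) + ξ t ω| ≤ |walk ξ x t ω - x| + |ξ t ω| := abs_add_le _ _
      _ ≤ (t : ℤ) + 1 := by omega
      _ = ((t + 1 : ℕ) : ℤ) := by push_cast; ring

/-- shifted increments -/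
def shf (η : ℕ → Ω → ℤ) (k : ℕ) : ℕ → Ω → ℤ := fun i => η (i + k)

lemma walk_shf_succ (η : ℕ → Ω → ℤ) (k : ℕ) (y : ℤ) (t : ℕ) (ω : Ω) :
    walk (shf η k) y (t + 1) ω = walk (shf η (k + 1)) (y + η k ω) t ω := by
  unfold walk shf
  rw [Finset.sum_range_succ']
  have : ∀ i ∈ Finset.range t, η (i + 1 + k) ω = η (i + (k + 1)) ω := by
    intro i _; congr 1; omega
  rw [Finset.sum_congr rfl this]
  simp [add_assoc, add_comm, add_left_comm, zero_add]


section HitLemmas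

variable {α : Type*} {D : Set (ℕ × α)} {Z : ℕ → Ω → α} {ω : Ω}

lemma hitBy_le (T : ℕ) : hitBy D Z T ω ≤ T := Nat.sInf_le (Or.inr rfl)

lemma revHitBy_le (T : ℕ) : revHitBy D Z T ω ≤ T := Nat.sInf_le (Or.inr rfl)

lemma hitBy_of_stay {T : ℕ} (h : ∀ s ≤ T, (s, Z s ω) ∈ D) : hitBy D Z T ω = T := by
  apply sInf_eq_of _ (Or.inr rfl)
  rintro m hm (hmem | hmem)
  · exact hmem (h m hm.le)
  · rw [Set.mem_singleton_iff] at hmem; omega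

lemma hitBy_succ_of_stay {T : ℕ} (h : ∀ s ≤ T, (s, Z s ω) ∈ D) :
    hitBy D Z (T + 1) ω = T + 1 := by
  apply sInf_eq_of _ (Or.inr rfl)
  rintro m hm (hmem | hmem)
  · exact hmem (h m (by omega))
  · rw [Set.mem_singleton_iff] at hmem; omega

lemma hitBy_of_not_stay {T : ℕ} (h : ¬ ∀ s ≤ T, (s, Z s ω) ∈ D) :
    hitBy D Z T ω ≤ T ∧ (hitBy D Z T ω, Z (hitBy D Z T ω) ω) ∉ D ∧
      hitBy D Z (T + 1) ω = hitBy D Z T ω := by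
  push_neg at h
  obtain ⟨s, hsT, hs⟩ := h
  set S : Set ℕ := {t | (t, Z t ω) ∉ D} with hSdef
  have hsS : s ∈ S := hs
  have hs₀ : sInf S ∈ S := Nat.sInf_mem ⟨s, hsS⟩
  have hs₀T : sInf S ≤ T := le_trans (Nat.sInf_le hsS) hsT
  have h1 : hitBy D Z T ω = sInf S := by
    apply sInf_eq_of _ (Or.inl hs₀)
    rintro m hm (hmem | hmem)
    · exact Nat.notMem_of_lt_sInf hm hmem
    · rw [Set.mem_singleton_iff] at hmem; omega
  have h2 : hitBy D Z (T + 1) ω = sInf S := by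
    apply sInf_eq_of _ (Or.inl hs₀)
    rintro m hm (hmem | hmem)
    · exact Nat.notMem_of_lt_sInf hm hmem
    · rw [Set.mem_singleton_iff] at hmem; omega
  refine ⟨h1 ▸ hs₀T, ?_, by rw [h1, h2]⟩
  rw [h1]; exact hs₀

lemma revHitBy_not_mem {T : ℕ} (h : revHitBy D Z T ω < T) :
    (T - revHitBy D Z T ω, Z (revHitBy D Z T ω) ω) ∉ D := by
  have hmem := Nat.sInf_mem (⟨T, Or.inr rfl⟩ :
    ({t | (T - t, Z t ω) ∉ D} ∪ {T}).Nonempty)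
  rcases hmem with hmem | hmem
  · exact hmem
  · rw [Set.mem_singleton_iff] at hmem
    have hrfl : revHitBy D Z T ω = sInf ({t | (T - t, Z t ω) ∉ D} ∪ {T}) := rfl
    omega

lemma hitBy_eq_hit {n : ℕ} (hne : ∃ t, (t, Z t ω) ∉ D) (hn : hit D Z ω ≤ n) :
    hitBy D Z n ω = hit D Z ω := by
  have hS : {t | (t, Z t ω) ∉ D}.Nonempty := hne
  apply le_antisymm (Nat.sInf_le (Or.inl (Nat.sInf_mem hS)))
  rcases Nat.sInf_mem (⟨n, Or.inr rfl⟩ : ({t | (t, Z t ω) ∉ D} ∪ {n}).Nonempty) with hm | hm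
  · exact Nat.sInf_le hm
  · rw [Set.mem_singleton_iff] at hm; rw [hm]; exact hn

end HitLemmas

section Meas

variable {α : Type*} (ξ : ℕ → Ω → ℤ) (D : Set (ℕ × ℤ))

lemma measurableSet_int (s : Set ℤ) : MeasurableSet s := s.to_countable.measurableSet

lemma measurable_walkP (hξm : ∀ n, Measurable (ξ n)) (t : ℕ) :
    Measurable fun p : ℤ × Ω => walk ξ p.1 t p.2 :=
  measurable_fst.add <| Finset.measurable_sum _ fun i _ => (hξm i).comp measurable_snd

lemma measurable_hitByP (hξm : ∀ n, Measurable (ξ n)) (T : ℕ) :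
    Measurable fun p : ℤ × Ω => hitBy D (walk ξ p.1) T p.2 := by
  apply measurable_to_countable'
  intro n
  have key : (fun p : ℤ × Ω => hitBy D (walk ξ p.1) T p.2) ⁻¹' {n} =
      (((fun p : ℤ × Ω => walk ξ p.1 n p.2) ⁻¹' {m | (n, m) ∉ D}) ∪
        (if n = T then Set.univ else ∅)) ∩
      ⋂ m : ℕ, ⋂ _ : m < n,
        (((fun p : ℤ × Ω => walk ξ p.1 m p.2) ⁻¹' {z | (m, z) ∉ D})ᶜ ∩
          (if m = T then ∅ else Set.univ)) := by
    ext p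
    have hne : ({t | (t, walk ξ p.1 t p.2) ∉ D} ∪ {T}).Nonempty := ⟨T, Or.inr rfl⟩
    simp only [Set.mem_preimage, Set.mem_setOf_eq, Set.mem_inter_iff, Set.mem_union,
      Set.mem_iInter, Set.mem_compl_iff, Set.mem_singleton_iff]
    constructor
    · intro h
      unfold hitBy at h
      have h' : n ∈ ({t | (t, walk ξ p.1 t p.2) ∉ D} ∪ {T}) ∧
          ∀ m < n, m ∉ ({t | (t, walk ξ p.1 t p.2) ∉ D} ∪ {T}) := by
        constructor
        · rw [← h]; exact Nat.sInf_mem hne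
        · intro m hm
          exact Nat.notMem_of_lt_sInf (by rw [h]; exact hm)
      rcases h'.1 with hc | hc
      · refine ⟨Or.inl hc, fun m hm => ?_⟩
        have := h'.2 m hm
        constructor
        · intro hmem; exact this (Or.inl hmem)
        · split
          · next heq => exact absurd (Or.inr heq) this
          · trivial
      · rw [Set.mem_singleton_iff] at hc
        refine ⟨Or.inr (by rw [if_pos hc]; trivial), fun m hm => ?_⟩
        have := h'.2 m hm
        constructor
        · intro hmem; exact this (Or.inl hmem)
        · split
          · next heq => exact absurd (Or.inr heq) this
          · trivial
    · rintro ⟨h1, h2⟩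
      apply sInf_eq_of
      · rcases h1 with h1 | h1
        · exact Or.inl h1
        · split at h1
          · next heq => exact Or.inr heq
          · exact absurd h1 (Set.notMem_empty p)
      · rintro m hm (hmem | hmem)
        · exact (h2 m hm).1 hmem
        · rw [Set.mem_singleton_iff] at hmem
          have := (h2 m hm).2
          rw [if_pos hmem] at this
          exact this
  rw [key]
  apply MeasurableSet.inter
  · apply MeasurableSet.union
    · exact measurable_walkP ξ hξm n (measurableSet_int _)
    · split <;> simp
  · exact MeasurableSet.iInter fun m => MeasurableSet.iInter fun _ =>
      MeasurableSet.inter (measurable_walkP ξ hξm m (measurableSet_int _)).compl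
        (by split <;> simp)

end Meas


lemma integrable_of_mem_finite (P : Measure Ω) [IsFiniteMeasure P] {f : Ω → ℝ}
    (hf : AEStronglyMeasurable f P) {S : Set ℝ} (hS : S.Finite)
    (h : ∀ᵐ ω ∂P, f ω ∈ S) : Integrable f P := by
  obtain ⟨C, hC⟩ := (hS.image abs).bddAbove
  refine Integrable.mono' (integrable_const C) hf ?_
  filter_upwards [h] with ω hω
  exact hC ⟨f ω, hω, rfl⟩

lemma fairSign_ae {P : Measure Ω} [IsProbabilityMeasure P] {f : Ω → ℤ}
    (hmf : Measurable f) (hfair : FairSign P f) :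
    ∀ᵐ ω ∂P, f ω = 1 ∨ f ω = -1 := by
  have hd : Disjoint (f ⁻¹' {1}) (f ⁻¹' {-1}) := by
    apply Set.disjoint_left.mpr
    intro ω h1 h2
    simp only [Set.mem_preimage, Set.mem_singleton_iff] at h1 h2
    omega
  have hu : P (f ⁻¹' {1} ∪ f ⁻¹' {-1}) = 1 := by
    rw [measure_union hd (hmf (measurableSet_singleton _))]
    have e1 : f ⁻¹' {1} = {ω | f ω = 1} := rfl
    have e2 : f ⁻¹' {-1} = {ω | f ω = -1} := rfl
    rw [e1, e2, hfair.1, hfair.2, ENNReal.add_halves]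
  have : P ((f ⁻¹' {1} ∪ f ⁻¹' {-1})ᶜ) = 0 := by
    rw [measure_compl ((hmf (measurableSet_singleton _)).union
      (hmf (measurableSet_singleton _))) (measure_ne_top _ _), hu, measure_univ, tsub_self]
  filter_upwards [measure_eq_zero_iff_ae_notMem.mp this] with ω hω
  by_contra hcon
  push_neg at hcon
  exact hω (by simp [Set.mem_union, Set.mem_preimage, hcon.1, hcon.2])

lemma half_half {α : Type*} [MeasurableSpace α] (P : Measure Ω) [IsProbabilityMeasure P]
    {f : Ω → ℤ} {g : Ω → α} (Φ : ℤ → α → ℝ)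
    (hmf : Measurable f) (hfair : FairSign P f) (hmg : Measurable g)
    (hΦ : ∀ e, Measurable (Φ e)) (hind : IndepFun f g P)
    (hint : ∀ e, Integrable (fun ω => Φ e (g ω)) P) :
    ∫ ω, Φ (f ω) (g ω) ∂P =
      ((∫ ω, Φ 1 (g ω) ∂P) + (∫ ω, Φ (-1) (g ω) ∂P)) / 2 := by
  classical
  have key : ∀ e : ℤ, ∫ ω, Φ e (g ω) * (({e} : Set ℤ).indicator (fun _ => (1:ℝ)) (f ω)) ∂P
      = (∫ ω, Φ e (g ω) ∂P) * (P (f ⁻¹' {e})).toReal := by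
    intro e
    have hindc : IndepFun (fun ω => Φ e (g ω))
        (fun ω => ({e} : Set ℤ).indicator (fun _ => (1:ℝ)) (f ω)) P := by
      exact hind.symm.comp (hΦ e) (measurable_const.indicator (measurableSet_singleton e))
    have hint2 : Integrable (fun ω => ({e} : Set ℤ).indicator (fun _ => (1:ℝ)) (f ω)) P := by
      refine (Integrable.indicator (integrable_const 1)
        (hmf (measurableSet_singleton e))).congr ?_
      filter_upwards with ω
      by_cases h : f ω ∈ ({e} : Set ℤ) <;>
        simp [Set.indicator_apply, h, Set.mem_preimage]
    have hmul : ∫ ω, Φ e (g ω) * (({e} : Set ℤ).indicator (fun _ => (1:ℝ)) (f ω)) ∂P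
        = (∫ ω, Φ e (g ω) ∂P) * ∫ ω, ({e} : Set ℤ).indicator (fun _ => (1:ℝ)) (f ω) ∂P :=
      hindc.integral_fun_mul_eq_mul_integral (hint e).1 hint2.1
    rw [hmul]
    · congr 1
      have : (fun ω => ({e} : Set ℤ).indicator (fun _ => (1:ℝ)) (f ω))
          = (f ⁻¹' {e}).indicator (fun _ => (1:ℝ)) := by
        ext ω
        by_cases h : f ω ∈ ({e} : Set ℤ) <;>
          simp [Set.indicator_apply, h, Set.mem_preimage]
      rw [this, integral_indicator_const _ (hmf (measurableSet_singleton e))]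
      simp
      rfl
  have hae := fairSign_ae hmf hfair
  have hsplit : ∫ ω, Φ (f ω) (g ω) ∂P
      = ∫ ω, (Φ 1 (g ω) * (({1} : Set ℤ).indicator (fun _ => (1:ℝ)) (f ω))
          + Φ (-1) (g ω) * (({-1} : Set ℤ).indicator (fun _ => (1:ℝ)) (f ω))) ∂P := by
    apply integral_congr_ae
    filter_upwards [hae] with ω hω
    rcases hω with h | h <;> rw [h] <;>
      · simp only [Set.indicator_apply, Set.mem_singleton_iff]
        norm_num
  have hprod : ∀ e : ℤ, Integrable (fun ω => Φ e (g ω) *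
      (({e} : Set ℤ).indicator (fun _ => (1:ℝ)) (f ω))) P := by
    intro e
    refine Integrable.mono' (hint e).abs
      (((hΦ e).comp hmg).mul
        ((measurable_const.indicator (measurableSet_singleton e)).comp hmf)).aestronglyMeasurable
      ?_
    filter_upwards with ω
    by_cases h : f ω ∈ ({e} : Set ℤ) <;>
      simp [Set.indicator_apply, h, abs_nonneg, Real.norm_eq_abs, abs_mul, Function.comp]
  rw [hsplit, integral_add (hprod 1) (hprod (-1)), key 1, key (-1)]
  have hp1 : (P (f ⁻¹' {1})).toReal = (1:ℝ)/2 := by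
    rw [show P (f ⁻¹' {1}) = 1/2 from hfair.1, ENNReal.toReal_div]; simp
  have hp2 : (P (f ⁻¹' {-1})).toReal = (1:ℝ)/2 := by
    rw [show P (f ⁻¹' {-1}) = 1/2 from hfair.2, ENNReal.toReal_div]; simp
  rw [hp1, hp2]; ring


/-- generic measurability of capped sInf times -/
lemma measurable_sInf_union {β : Type*} [MeasurableSpace β] (Q : ℕ → β → Prop)
    (hQ : ∀ t, MeasurableSet {b | Q t b}) (T : ℕ) :
    Measurable fun b => sInf ({t | Q t b} ∪ {T}) := by
  apply measurable_to_countable'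
  intro n
  have key : (fun b => sInf ({t | Q t b} ∪ {T})) ⁻¹' {n} =
      ({b | Q n b} ∪ (if n = T then Set.univ else ∅)) ∩
      ⋂ m : ℕ, ⋂ _ : m < n, ({b | Q m b}ᶜ ∩ (if m = T then ∅ else Set.univ)) := by
    ext b
    have hne : ({t | Q t b} ∪ {T}).Nonempty := ⟨T, Or.inr rfl⟩
    simp only [Set.mem_preimage, Set.mem_setOf_eq, Set.mem_inter_iff, Set.mem_union,
      Set.mem_iInter, Set.mem_compl_iff, Set.mem_singleton_iff]
    constructor
    · intro h
      have hmem : n ∈ ({t | Q t b} ∪ {T}) := by rw [← h]; exact Nat.sInf_mem hne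
      have hlt : ∀ m < n, m ∉ ({t | Q t b} ∪ {T}) := fun m hm =>
        Nat.notMem_of_lt_sInf (by rw [h]; exact hm)
      constructor
      · rcases hmem with hc | hc
        · exact Or.inl hc
        · rw [Set.mem_singleton_iff] at hc
          exact Or.inr (by rw [if_pos hc]; trivial)
      · intro m hm
        have := hlt m hm
        refine ⟨fun hmem' => this (Or.inl hmem'), ?_⟩
        split
        · next heq => exact absurd (Or.inr heq) this
        · trivial
    · rintro ⟨h1, h2⟩
      apply le_antisymm
      · apply Nat.sInf_le
        rcases h1 with h1 | h1
        · exact Or.inl h1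
        · split at h1
          · next heq => exact Or.inr heq
          · exact absurd h1 (Set.notMem_empty b)
      · apply le_of_not_gt
        intro hlt
        have hm := Nat.sInf_mem hne
        rcases hm with hm | hm
        · exact (h2 _ hlt).1 hm
        · rw [Set.mem_singleton_iff] at hm
          have := (h2 _ hlt).2
          rw [if_pos hm] at this
          exact this
  rw [key]
  refine MeasurableSet.inter (MeasurableSet.union (hQ n) (by split <;> simp)) ?_
  exact MeasurableSet.iInter fun m => MeasurableSet.iInter fun _ =>
    MeasurableSet.inter (hQ m).compl (by split <;> simp)

lemma measurable_sInf {β : Type*} [MeasurableSpace β] (Q : ℕ → β → Prop)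
    (hQ : ∀ t, MeasurableSet {b | Q t b}) :
    Measurable fun b => sInf {t | Q t b} := by
  apply measurable_to_countable'
  intro n
  match n with
  | 0 =>
    have key : (fun b => sInf {t | Q t b}) ⁻¹' {0} =
        {b | Q 0 b} ∪ ⋂ t, {b | Q t b}ᶜ := by
      ext b
      simp only [Set.mem_preimage, Set.mem_singleton_iff, Set.mem_union, Set.mem_setOf_eq,
        Set.mem_iInter, Set.mem_compl_iff]
      rw [Nat.sInf_eq_zero]
      constructor
      · rintro (h | h)
        · exact Or.inl h
        · exact Or.inr fun t ht => (Set.eq_empty_iff_forall_notMem.mp h t) ht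
      · rintro (h | h)
        · exact Or.inl h
        · refine Or.inr (Set.eq_empty_iff_forall_notMem.mpr fun t ht => h t ht)
    rw [key]
    exact MeasurableSet.union (hQ 0) (MeasurableSet.iInter fun t => (hQ t).compl)
  | (n + 1) =>
    have key : (fun b => sInf {t | Q t b}) ⁻¹' {n + 1} =
        {b | Q (n+1) b} ∩ ⋂ m : ℕ, ⋂ _ : m < n + 1, {b | Q m b}ᶜ := by
      ext b
      simp only [Set.mem_preimage, Set.mem_singleton_iff, Set.mem_inter_iff, Set.mem_setOf_eq,
        Set.mem_iInter, Set.mem_compl_iff]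
      constructor
      · intro h
        have hne : {t | Q t b}.Nonempty := by
          by_contra hcon
          rw [Set.not_nonempty_iff_eq_empty] at hcon
          rw [hcon, Nat.sInf_empty] at h
          omega
        exact ⟨by rw [← h]; exact Nat.sInf_mem hne,
          fun m hm => Nat.notMem_of_lt_sInf (by rw [h]; exact hm)⟩
      · rintro ⟨h1, h2⟩
        exact le_antisymm (Nat.sInf_le h1)
          (le_of_not_gt fun hlt => h2 _ hlt (Nat.sInf_mem (⟨n+1, h1⟩ : {t | Q t b}.Nonempty)))
    rw [key]
    exact MeasurableSet.inter (hQ (n+1))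
      (MeasurableSet.iInter fun m => MeasurableSet.iInter fun _ => (hQ m).compl)

lemma measurable_stopped {β : Type*} [MeasurableSpace β] {W : ℕ → β → ℤ} {τ : β → ℕ}
    (hW : ∀ t, Measurable (W t)) (hτ : Measurable τ) :
    Measurable fun b => W (τ b) b := by
  apply measurable_to_countable'
  intro z
  have key : (fun b => W (τ b) b) ⁻¹' {z} = ⋃ n, τ ⁻¹' {n} ∩ (W n) ⁻¹' {z} := by
    ext b
    simp only [Set.mem_preimage, Set.mem_singleton_iff, Set.mem_iUnion, Set.mem_inter_iff]
    constructor
    · intro h; exact ⟨τ b, rfl, h⟩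
    · rintro ⟨n, h1, h2⟩; rw [h1]; exact h2
  rw [key]
  exact MeasurableSet.iUnion fun n =>
    (hτ (measurableSet_singleton n)).inter (hW n (measurableSet_singleton z))

/-- independence of one coordinate from a finite tuple of other coordinates -/
lemma indep_of_ne (P : Measure Ω) (ξ η : ℕ → Ω → ℤ)
    (hmeas : ∀ j : ℕ ⊕ ℕ, Measurable (Sum.elim ξ η j))
    (hind : iIndepFun (Sum.elim ξ η) P)
    (j₀ : ℕ ⊕ ℕ) (T : ℕ) (u : Fin T → ℕ ⊕ ℕ) (hu : ∀ i, u i ≠ j₀) :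
    IndepFun (Sum.elim ξ η j₀) (fun ω (i : Fin T) => Sum.elim ξ η (u i) ω) P := by
  classical
  have hdisj : Disjoint ({j₀} : Finset (ℕ ⊕ ℕ)) (Finset.image u Finset.univ) := by
    simp only [Finset.disjoint_left, Finset.mem_singleton, Finset.mem_image]
    rintro a rfl ⟨i, _, hi⟩
    exact hu i hi
  have base := hind.indepFun_finset {j₀} (Finset.image u Finset.univ) hdisj hmeas
  have h1 : Measurable fun v : ({x // x ∈ ({j₀} : Finset (ℕ ⊕ ℕ))} → ℤ) =>
      v ⟨j₀, Finset.mem_singleton_self j₀⟩ := measurable_pi_apply _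
  have h2 : Measurable fun v : ({x // x ∈ Finset.image u Finset.univ} → ℤ) =>
      (fun i : Fin T => v ⟨u i, Finset.mem_image_of_mem u (Finset.mem_univ i)⟩) :=
    measurable_pi_lambda _ fun i => measurable_pi_apply _
  exact base.comp h1 h2


end Helpers

section Main

open scoped Classical
open Filter

variable {Ω : Type*} [MeasurableSpace Ω]
variable (P : Measure Ω) [IsProbabilityMeasure P] (ξ η : ℕ → Ω → ℤ)
variable (D : Set (ℕ × ℤ)) (lam : Measure ℤ) [IsProbabilityMeasure lam]

def fT (T : ℕ) (p : ℤ × Ω) : ℤ := walk ξ p.1 (hitBy D (walk ξ p.1) T p.2) p.2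

def fI (p : ℤ × Ω) : ℤ := walk ξ p.1 (hit D (walk ξ p.1) p.2) p.2

def stay (T : ℕ) (p : ℤ × Ω) : Prop := ∀ s ≤ T, (s, walk ξ p.1 s p.2) ∈ D

def Aa (T : ℕ) (y : ℤ) : ℝ := ∫ p, ((|fT ξ D T p - y| : ℤ) : ℝ) ∂(lam.prod P)

def AI (y : ℤ) : ℝ := ∫ p, ((|fI ξ D p - y| : ℤ) : ℝ) ∂(lam.prod P)

def Bb (y : ℤ) : ℝ := ∫ x : ℤ, ((|x - y| : ℤ) : ℝ) ∂lam

def Cc (T : ℕ) (y : ℤ) : ℝ :=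
  ∫ p, (if stay ξ D T p ∧ walk ξ p.1 T p.2 = y then (1:ℝ) else 0) ∂(lam.prod P)

def Rr (T k : ℕ) (y : ℤ) : ℝ :=
  ∫ ω, (if revHitBy D (walk (shf η k) y) T ω < T then
      Aa P ξ D lam (T - revHitBy D (walk (shf η k) y) T ω)
        (walk (shf η k) y (revHitBy D (walk (shf η k) y) T ω) ω)
    else Bb lam (walk (shf η k) y (revHitBy D (walk (shf η k) y) T ω) ω)) ∂P

variable {P ξ η D lam}

lemma mfT (hξm : ∀ n, Measurable (ξ n)) (T : ℕ) : Measurable (fT ξ D T) :=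
  measurable_stopped (W := fun t (p : ℤ × Ω) => walk ξ p.1 t p.2) (measurable_walkP ξ hξm)
    (measurable_sInf_union (fun t (p : ℤ × Ω) => (t, walk ξ p.1 t p.2) ∉ D)
      (fun t => (measurable_walkP ξ hξm t) (measurableSet_int {m | (t, m) ∉ D})) T)

lemma mfI (hξm : ∀ n, Measurable (ξ n)) : Measurable (fI ξ D) :=
  measurable_stopped (W := fun t (p : ℤ × Ω) => walk ξ p.1 t p.2) (measurable_walkP ξ hξm)
    (measurable_sInf (fun t (p : ℤ × Ω) => (t, walk ξ p.1 t p.2) ∉ D)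
      (fun t => (measurable_walkP ξ hξm t) (measurableSet_int {m | (t, m) ∉ D})))

lemma mwalkO (hηm : ∀ n, Measurable (η n)) (k : ℕ) (y : ℤ) (t : ℕ) :
    Measurable (fun ω => walk (shf η k) y t ω) :=
  measurable_const.add <| Finset.measurable_sum _ fun i _ => hηm _

lemma mrev (hηm : ∀ n, Measurable (η n)) (k : ℕ) (y : ℤ) (T : ℕ) :
    Measurable (fun ω => revHitBy D (walk (shf η k) y) T ω) :=
  measurable_sInf_union (fun t ω => (T - t, walk (shf η k) y t ω) ∉ D)
    (fun t => (mwalkO hηm k y t) (measurableSet_int {m | (T - t, m) ∉ D})) T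

lemma mYτ (hηm : ∀ n, Measurable (η n)) (k : ℕ) (y : ℤ) (T : ℕ) :
    Measurable (fun ω => walk (shf η k) y (revHitBy D (walk (shf η k) y) T ω) ω) :=
  measurable_stopped (W := fun t ω => walk (shf η k) y t ω) (mwalkO hηm k y) (mrev hηm k y T)

lemma int_fT (hUI : UniformIntegrable
      (fun (t : ℕ) (p : ℤ × Ω) => ((walk ξ p.1 (hitBy D (walk ξ p.1) t p.2) p.2 : ℤ) : ℝ))
      1 (lam.prod P)) (T : ℕ) :
    Integrable (fun p => ((fT ξ D T p : ℤ) : ℝ)) (lam.prod P) := by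
  obtain ⟨C, hC⟩ := hUI.2.2
  exact memLp_one_iff_integrable.mp ⟨hUI.1 T, lt_of_le_of_lt (hC T) ENNReal.coe_lt_top⟩

lemma int_fT_abs (hUI : UniformIntegrable
      (fun (t : ℕ) (p : ℤ × Ω) => ((walk ξ p.1 (hitBy D (walk ξ p.1) t p.2) p.2 : ℤ) : ℝ))
      1 (lam.prod P)) (T : ℕ) (y : ℤ) :
    Integrable (fun p => ((|fT ξ D T p - y| : ℤ) : ℝ)) (lam.prod P) := by
  have h2 := ((int_fT hUI T).sub (integrable_const ((y : ℤ) : ℝ))).abs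
  exact h2.congr (Filter.Eventually.of_forall fun p => by simp only [Pi.sub_apply]; push_cast; ring)

end Main

section Main2

open scoped Classical
open Filter

variable {Ω : Type*} [MeasurableSpace Ω]
variable {P : Measure Ω} [IsProbabilityMeasure P] {ξ η : ℕ → Ω → ℤ}
variable {D : Set (ℕ × ℤ)} {lam : Measure ℤ} [IsProbabilityMeasure lam]

lemma baseA (hξm : ∀ n, Measurable (ξ n)) (y : ℤ) : Aa P ξ D lam 0 y = Bb lam y := by
  have h0 : ∀ p : ℤ × Ω, fT ξ D 0 p = p.1 := by
    intro p
    unfold fT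
    have : hitBy D (walk ξ p.1) 0 p.2 = 0 :=
      Nat.le_zero.mp (hitBy_le (D := D) (Z := walk ξ p.1) (ω := p.2) 0)
    rw [this, walk_zero]
  unfold Aa
  have e1 : ∫ p, ((|fT ξ D 0 p - y| : ℤ) : ℝ) ∂(lam.prod P)
      = ∫ p : ℤ × Ω, ((|p.1 - y| : ℤ) : ℝ) ∂(lam.prod P) := by
    apply integral_congr_ae (Filter.Eventually.of_forall fun p => ?_)
    rw [h0]
  rw [e1]
  have e2 : ∫ p : ℤ × Ω, ((|p.1 - y| : ℤ) : ℝ) ∂(lam.prod P)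
      = ∫ x : ℤ, ((|x - y| : ℤ) : ℝ) ∂(Measure.map Prod.fst (lam.prod P)) := by
    rw [integral_map measurable_fst.aemeasurable
      (measurable_of_countable _).aestronglyMeasurable]
  rw [e2, Measure.map_fst_prod]
  simp [Bb]

lemma stepA (hξm : ∀ n, Measurable (ξ n)) (hηm : ∀ n, Measurable (η n))
    (hξf : ∀ n, FairSign P (ξ n))
    (hind : iIndepFun (Sum.elim ξ η) P)
    (hInt : ∀ T y, Integrable (fun p => ((|fT ξ D T p - y| : ℤ) : ℝ)) (lam.prod P))
    (T : ℕ) (y : ℤ) :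
    Aa P ξ D lam (T + 1) y = Aa P ξ D lam T y + Cc P ξ D lam T y := by
  classical
  have hcase : ∀ p : ℤ × Ω,
      ((|fT ξ D (T+1) p - y| : ℤ) : ℝ) - ((|fT ξ D T p - y| : ℤ) : ℝ)
        = (if stay ξ D T p then
            ((|walk ξ p.1 T p.2 + ξ T p.2 - y| : ℤ) : ℝ) - ((|walk ξ p.1 T p.2 - y| : ℤ) : ℝ)
          else 0) := by
    intro p
    by_cases hs : stay ξ D T p
    · rw [if_pos hs]
      have h1 : hitBy D (walk ξ p.1) T p.2 = T := hitBy_of_stay hs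
      have h2 : hitBy D (walk ξ p.1) (T+1) p.2 = T + 1 := hitBy_succ_of_stay hs
      unfold fT
      rw [h1, h2, walk_succ]
    · rw [if_neg hs]
      have h3 := hitBy_of_not_stay (D := D) (Z := walk ξ p.1) (ω := p.2) hs
      unfold fT
      rw [h3.2.2]
      ring
  have hsub : Aa P ξ D lam (T+1) y - Aa P ξ D lam T y
      = ∫ p, (if stay ξ D T p then
            ((|walk ξ p.1 T p.2 + ξ T p.2 - y| : ℤ) : ℝ) - ((|walk ξ p.1 T p.2 - y| : ℤ) : ℝ)
          else 0) ∂(lam.prod P) := by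
    unfold Aa
    rw [← integral_sub (hInt (T+1) y) (hInt T y)]
    exact integral_congr_ae (Filter.Eventually.of_forall hcase)
  set Φ : ℤ → ℤ → (Fin T → ℤ) → ℝ := fun x e v =>
    if (∀ s ≤ T, (s, x + ∑ i ∈ Finset.range s, (if h : i < T then v ⟨i, h⟩ else 0)) ∈ D) then
      ((|x + (∑ i ∈ Finset.range T, (if h : i < T then v ⟨i, h⟩ else 0)) + e - y| : ℤ) : ℝ)
        - ((|x + (∑ i ∈ Finset.range T, (if h : i < T then v ⟨i, h⟩ else 0)) - y| : ℤ) : ℝ)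
    else 0 with hΦdef
  set g : Ω → (Fin T → ℤ) := fun ω i => ξ i ω with hgdef
  have hsum : ∀ (x : ℤ) (ω : Ω), ∀ s ≤ T,
      x + ∑ i ∈ Finset.range s, (if h : i < T then g ω ⟨i, h⟩ else 0) = walk ξ x s ω := by
    intro x ω s hs
    unfold walk
    congr 1
    apply Finset.sum_congr rfl
    intro i hi
    rw [Finset.mem_range] at hi
    rw [dif_pos (lt_of_lt_of_le hi hs)]
  have hkey : ∀ (x : ℤ) (ω : Ω) (e : ℤ), Φ x e (g ω) =
      (if stay ξ D T (x, ω) then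
        ((|walk ξ x T ω + e - y| : ℤ) : ℝ) - ((|walk ξ x T ω - y| : ℤ) : ℝ) else 0) := by
    intro x ω e
    have hcond : (∀ s ≤ T,
        (s, x + ∑ i ∈ Finset.range s, (if h : i < T then g ω ⟨i, h⟩ else 0)) ∈ D)
        ↔ stay ξ D T (x, ω) := by
      constructor
      · intro hc s hs; have := hc s hs; rwa [hsum x ω s hs] at this
      · intro hc s hs; rw [hsum x ω s hs]; exact hc s hs
    simp only [hΦdef]
    by_cases hc : stay ξ D T (x, ω)
    · rw [if_pos (hcond.mpr hc), if_pos hc, hsum x ω T le_rfl]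
    · rw [if_neg (fun h => hc (hcond.mp h)), if_neg hc]
  have hΦmeas : ∀ x e, Measurable (Φ x e) := fun x e => measurable_of_countable _
  have hgmeas : Measurable g := measurable_pi_lambda _ fun i => hξm i
  have hindep : IndepFun (ξ T) g P := by
    have hmeas : ∀ j : ℕ ⊕ ℕ, Measurable (Sum.elim ξ η j) := by
      rintro (n | n)
      · exact hξm n
      · exact hηm n
    have := indep_of_ne P ξ η hmeas hind (Sum.inl T) T (fun i => Sum.inl i)
      (fun i h => absurd (Sum.inl.inj h) (by have := i.isLt; omega))
    exact this
  have hbound : ∀ (x e : ℤ) (v : Fin T → ℤ), |Φ x e v| ≤ |(e : ℝ)| := by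
    intro x e v
    simp only [hΦdef]
    split
    · set w : ℤ := x + (∑ i ∈ Finset.range T, (if h : i < T then v ⟨i, h⟩ else 0)) with hw
      set a : ℤ := |w + e - y| with ha
      set b : ℤ := |w - y| with hb
      have hz : |a - b| ≤ |e| := by
        have h1 := abs_abs_sub_abs_le_abs_sub (w + e - y) (w - y)
        have h2 : (w + e - y) - (w - y) = e := by ring
        rw [h2] at h1
        exact h1
      push_cast at hz
      exact_mod_cast hz
    · simp [abs_nonneg]
  have hintΦ : ∀ (x e : ℤ), Integrable (fun ω => Φ x e (g ω)) P := fun x e =>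
    Integrable.mono' (integrable_const |(e : ℝ)|)
      ((hΦmeas x e).comp hgmeas).aestronglyMeasurable
      (Filter.Eventually.of_forall fun ω => hbound x e (g ω))
  have hinner : ∀ x : ℤ, (∫ ω, (if stay ξ D T (x, ω) then
        ((|walk ξ x T ω + ξ T ω - y| : ℤ) : ℝ) - ((|walk ξ x T ω - y| : ℤ) : ℝ) else 0) ∂P)
      = ∫ ω, (if stay ξ D T (x, ω) ∧ walk ξ x T ω = y then (1:ℝ) else 0) ∂P := by
    intro x
    have e1 : (∫ ω, (if stay ξ D T (x, ω) then
        ((|walk ξ x T ω + ξ T ω - y| : ℤ) : ℝ) - ((|walk ξ x T ω - y| : ℤ) : ℝ) else 0) ∂P)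
        = ∫ ω, Φ x (ξ T ω) (g ω) ∂P :=
      integral_congr_ae (Filter.Eventually.of_forall fun ω => (hkey x ω (ξ T ω)).symm)
    rw [e1, half_half P (Φ x) (hξm T) (hξf T) hgmeas (hΦmeas x) hindep (hintΦ x)]
    rw [← integral_add (hintΦ x 1) (hintΦ x (-1)), ← integral_div]
    apply integral_congr_ae (Filter.Eventually.of_forall fun ω => ?_)
    rw [hkey x ω 1, hkey x ω (-1)]
    by_cases hc : stay ξ D T (x, ω)
    · rw [if_pos hc, if_pos hc]
      set w : ℤ := walk ξ x T ω with hwdef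
      have hstep := abs_step w y
      by_cases hw : w = y
      · rw [if_pos hw] at hstep
        rw [if_pos ⟨hc, hw⟩]
        have hr : ((|w + 1 - y| : ℤ) : ℝ) + ((|w - 1 - y| : ℤ) : ℝ)
            = 2 * ((|w - y| : ℤ) : ℝ) + 2 := by exact_mod_cast hstep
        have hm1 : w + (-1) - y = w - 1 - y := by ring
        rw [hm1]
        linarith [hr]
      · rw [if_neg hw] at hstep
        rw [if_neg (fun hcon => hw hcon.2)]
        have hr : ((|w + 1 - y| : ℤ) : ℝ) + ((|w - 1 - y| : ℤ) : ℝ)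
            = 2 * ((|w - y| : ℤ) : ℝ) + 0 := by exact_mod_cast hstep
        have hm1 : w + (-1) - y = w - 1 - y := by ring
        rw [hm1]
        linarith [hr]
    · rw [if_neg hc, if_neg hc, if_neg (fun hcon => hc hcon.1)]
      norm_num
  have hint1 : Integrable (fun p : ℤ × Ω => (if stay ξ D T p then
      ((|walk ξ p.1 T p.2 + ξ T p.2 - y| : ℤ) : ℝ) - ((|walk ξ p.1 T p.2 - y| : ℤ) : ℝ)
      else 0)) (lam.prod P) :=
    ((hInt (T+1) y).sub (hInt T y)).congr (Filter.Eventually.of_forall hcase)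
  have hmS : MeasurableSet {p : ℤ × Ω | stay ξ D T p ∧ walk ξ p.1 T p.2 = y} := by
    have hsetA : {p : ℤ × Ω | stay ξ D T p ∧ walk ξ p.1 T p.2 = y} =
        {p : ℤ × Ω | stay ξ D T p} ∩ ((fun p : ℤ × Ω => walk ξ p.1 T p.2) ⁻¹' {y}) := rfl
    have hset : {p : ℤ × Ω | stay ξ D T p} = ⋂ s : ℕ, ⋂ (_ : s ≤ T),
        (fun p : ℤ × Ω => walk ξ p.1 s p.2) ⁻¹' {m | (s, m) ∈ D} := by
      ext p
      simp only [stay, Set.mem_setOf_eq, Set.mem_iInter, Set.mem_preimage]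
    rw [hsetA, hset]
    exact (MeasurableSet.iInter fun s => MeasurableSet.iInter fun _ =>
        measurable_walkP ξ hξm s (measurableSet_int {m | (s, m) ∈ D})).inter
      (measurable_walkP ξ hξm T (measurableSet_singleton y))
  have hint2 : Integrable (fun p : ℤ × Ω =>
      (if stay ξ D T p ∧ walk ξ p.1 T p.2 = y then (1:ℝ) else 0)) (lam.prod P) := by
    have hset : (fun p : ℤ × Ω => (if stay ξ D T p ∧ walk ξ p.1 T p.2 = y then (1:ℝ) else 0))
        = Set.indicator {p : ℤ × Ω | stay ξ D T p ∧ walk ξ p.1 T p.2 = y} (fun _ => 1) := by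
      ext p
      rw [Set.indicator_apply]
      rfl
    rw [hset]
    exact (integrable_const 1).indicator hmS
  have hmain : (∫ p, (if stay ξ D T p then
        ((|walk ξ p.1 T p.2 + ξ T p.2 - y| : ℤ) : ℝ) - ((|walk ξ p.1 T p.2 - y| : ℤ) : ℝ)
        else 0) ∂(lam.prod P)) = Cc P ξ D lam T y := by
    rw [integral_prod _ hint1]
    unfold Cc
    rw [integral_prod _ hint2]
    exact integral_congr_ae (Filter.Eventually.of_forall fun x => hinner x)
  linarith [hsub, hmain]

lemma lapA (hD : IsRootCont D) (hξm : ∀ n, Measurable (ξ n)) (hηm : ∀ n, Measurable (η n))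
    (hξf : ∀ n, FairSign P (ξ n))
    (hind : iIndepFun (Sum.elim ξ η) P)
    (hInt : ∀ T y, Integrable (fun p => ((|fT ξ D T p - y| : ℤ) : ℝ)) (lam.prod P))
    (T : ℕ) (y : ℤ) (hDy : (T+1, y) ∈ D) :
    Aa P ξ D lam (T+1) y = (Aa P ξ D lam T (y+1) + Aa P ξ D lam T (y-1)) / 2 := by
  classical
  have hstep := stepA hξm hηm hξf hind hInt T y
  have hcc : (Aa P ξ D lam T (y+1) + Aa P ξ D lam T (y-1)) / 2 - Aa P ξ D lam T y
      = ∫ p, (if fT ξ D T p = y then (1:ℝ) else 0) ∂(lam.prod P) := by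
    unfold Aa
    have hintavg : Integrable (fun p : ℤ × Ω =>
        (((|fT ξ D T p - (y+1)| : ℤ) : ℝ) + ((|fT ξ D T p - (y-1)| : ℤ) : ℝ)) / 2)
        (lam.prod P) := ((hInt T (y+1)).add (hInt T (y-1))).div_const 2
    have hI1 : ∫ p, (((|fT ξ D T p - (y+1)| : ℤ) : ℝ) + ((|fT ξ D T p - (y-1)| : ℤ) : ℝ))
          ∂(lam.prod P)
        = (∫ p, ((|fT ξ D T p - (y+1)| : ℤ) : ℝ) ∂(lam.prod P))
          + ∫ p, ((|fT ξ D T p - (y-1)| : ℤ) : ℝ) ∂(lam.prod P) :=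
      integral_add (hInt T (y+1)) (hInt T (y-1))
    have hI2 : ∫ p, ((((|fT ξ D T p - (y+1)| : ℤ) : ℝ) + ((|fT ξ D T p - (y-1)| : ℤ) : ℝ)) / 2)
          ∂(lam.prod P)
        = (∫ p, (((|fT ξ D T p - (y+1)| : ℤ) : ℝ) + ((|fT ξ D T p - (y-1)| : ℤ) : ℝ))
            ∂(lam.prod P)) / 2 := integral_div _ _
    have hI3 : ∫ p, ((((|fT ξ D T p - (y+1)| : ℤ) : ℝ) + ((|fT ξ D T p - (y-1)| : ℤ) : ℝ)) / 2
          - ((|fT ξ D T p - y| : ℤ) : ℝ)) ∂(lam.prod P)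
        = (∫ p, ((((|fT ξ D T p - (y+1)| : ℤ) : ℝ) + ((|fT ξ D T p - (y-1)| : ℤ) : ℝ)) / 2)
            ∂(lam.prod P)) - ∫ p, ((|fT ξ D T p - y| : ℤ) : ℝ) ∂(lam.prod P) :=
      integral_sub hintavg (hInt T y)
    rw [← hI1, ← hI2, ← hI3]
    apply integral_congr_ae (Filter.Eventually.of_forall fun p => ?_)
    set w : ℤ := fT ξ D T p with hwdef
    have h1 : w - (y+1) = w - 1 - y := by ring
    have h2 : w - (y-1) = w + 1 - y := by ring
    rw [h1, h2]
    have hstep2 := abs_step w y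
    by_cases hw : w = y
    · rw [if_pos hw] at hstep2
      rw [if_pos hw]
      have hr : ((|w + 1 - y| : ℤ) : ℝ) + ((|w - 1 - y| : ℤ) : ℝ)
          = 2 * ((|w - y| : ℤ) : ℝ) + 2 := by exact_mod_cast hstep2
      linarith [hr]
    · rw [if_neg hw] at hstep2
      rw [if_neg hw]
      have hr : ((|w + 1 - y| : ℤ) : ℝ) + ((|w - 1 - y| : ℤ) : ℝ)
          = 2 * ((|w - y| : ℤ) : ℝ) + 0 := by exact_mod_cast hstep2
      linarith [hr]
  have hCeq : (∫ p, (if fT ξ D T p = y then (1:ℝ) else 0) ∂(lam.prod P)) = Cc P ξ D lam T y := by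
    unfold Cc
    apply integral_congr_ae (Filter.Eventually.of_forall fun p => ?_)
    have hiff : fT ξ D T p = y ↔ (stay ξ D T p ∧ walk ξ p.1 T p.2 = y) := by
      constructor
      · intro hf
        by_cases hs : stay ξ D T p
        · refine ⟨hs, ?_⟩
          have h1 : hitBy D (walk ξ p.1) T p.2 = T := hitBy_of_stay hs
          unfold fT at hf
          rwa [h1] at hf
        · exfalso
          obtain ⟨hle, hnot, _⟩ := hitBy_of_not_stay (D := D) (Z := walk ξ p.1) (ω := p.2) hs
          unfold fT at hf
          rw [hf] at hnot
          exact hnot (hD (T+1) y hDy _ (by omega))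
      · rintro ⟨hs, hw⟩
        unfold fT
        rw [hitBy_of_stay hs]
        exact hw
    exact if_congr hiff rfl rfl
  linarith [hstep, hcc, hCeq]

end Main2

section Main3

open scoped Classical
open Filter

variable {Ω : Type*} [MeasurableSpace Ω]
variable {P : Measure Ω} [IsProbabilityMeasure P] {ξ η : ℕ → Ω → ℤ}
variable {D : Set (ℕ × ℤ)} {lam : Measure ℤ} [IsProbabilityMeasure lam]

lemma coreT (hD : IsRootCont D) (hξm : ∀ n, Measurable (ξ n)) (hηm : ∀ n, Measurable (η n))
    (hξf : ∀ n, FairSign P (ξ n)) (hηf : ∀ n, FairSign P (η n))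
    (hind : iIndepFun (Sum.elim ξ η) P)
    (hInt : ∀ T y, Integrable (fun p => ((|fT ξ D T p - y| : ℤ) : ℝ)) (lam.prod P)) :
    ∀ T k y, Aa P ξ D lam T y = Rr P ξ η D lam T k y := by
  intro T
  induction T with
  | zero =>
    intro k y
    have hτ : ∀ ω : Ω, revHitBy D (walk (shf η k) y) 0 ω = 0 := fun ω =>
      Nat.le_zero.mp (revHitBy_le 0)
    have hR : Rr P ξ η D lam 0 k y = ∫ (_ : Ω), Bb lam y ∂P := by
      unfold Rr
      apply integral_congr_ae (Eventually.of_forall fun ω => ?_)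
      rw [hτ ω]
      simp [walk_zero]
    rw [hR, integral_const]
    simp [baseA hξm y]
  | succ T ih =>
    intro k y
    by_cases hDy : (T+1, y) ∈ D
    · -- interior case: shift the reversed walk by one step
      have h0 : ∀ ω : Ω,
          (0:ℕ) ∉ ({t | (T + 1 - t, walk (shf η k) y t ω) ∉ D} ∪ {T+1}) := by
        intro ω
        rintro (hmem | hmem)
        · apply hmem
          simpa [walk_zero] using hDy
        · rw [Set.mem_singleton_iff] at hmem; omega
      have hshiftset : ∀ ω : Ω,
          {n : ℕ | n + 1 ∈ ({t | (T + 1 - t, walk (shf η k) y t ω) ∉ D} ∪ {T+1})}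
          = {t : ℕ | (T - t, walk (shf η (k+1)) (y + η k ω) t ω) ∉ D} ∪ {T} := by
        intro ω
        ext n
        simp only [Set.mem_setOf_eq, Set.mem_union, Set.mem_singleton_iff]
        have e1 : T + 1 - (n+1) = T - n := by omega
        constructor
        · rintro (hmem | hmem)
          · left
            rw [e1, walk_shf_succ] at hmem
            exact hmem
          · right; omega
        · rintro (hmem | hmem)
          · left
            rw [e1, walk_shf_succ]
            exact hmem
          · right; omega
      have hτshift : ∀ ω : Ω, revHitBy D (walk (shf η k) y) (T+1) ω
          = revHitBy D (walk (shf η (k+1)) (y + η k ω)) T ω + 1 := by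
        intro ω
        unfold revHitBy
        rw [sInf_shift ⟨T+1, Or.inr rfl⟩ (h0 ω), hshiftset ω]
      set body : ℤ → Ω → ℝ := fun y' ω =>
        if revHitBy D (walk (shf η (k+1)) y') T ω < T then
          Aa P ξ D lam (T - revHitBy D (walk (shf η (k+1)) y') T ω)
            (walk (shf η (k+1)) y' (revHitBy D (walk (shf η (k+1)) y') T ω) ω)
        else Bb lam (walk (shf η (k+1)) y' (revHitBy D (walk (shf η (k+1)) y') T ω) ω)
        with hbodydef
      have hbody : ∀ ω : Ω, (if revHitBy D (walk (shf η k) y) (T+1) ω < T+1 then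
            Aa P ξ D lam (T + 1 - revHitBy D (walk (shf η k) y) (T+1) ω)
              (walk (shf η k) y (revHitBy D (walk (shf η k) y) (T+1) ω) ω)
          else Bb lam (walk (shf η k) y (revHitBy D (walk (shf η k) y) (T+1) ω) ω))
          = body (y + η k ω) ω := by
        intro ω
        rw [hτshift ω]
        set τ' := revHitBy D (walk (shf η (k+1)) (y + η k ω)) T ω with hτ'
        have e1 : T + 1 - (τ' + 1) = T - τ' := by omega
        have e2 : walk (shf η k) y (τ' + 1) ω = walk (shf η (k+1)) (y + η k ω) τ' ω :=
          walk_shf_succ η k y τ' ω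
        simp only [hbodydef]
        by_cases hlt : τ' < T
        · rw [if_pos (by omega : τ' + 1 < T + 1), if_pos hlt, e1, e2]
        · rw [if_neg (by omega : ¬ (τ' + 1 < T + 1)), if_neg hlt, e2]
      set u : (Fin T → ℤ) → ℕ → ℤ := fun v i => if h : i < T then v ⟨i, h⟩ else 0 with hudef
      set Φ : ℤ → (Fin T → ℤ) → ℝ := fun e v =>
        if sInf ({t | (T - t, (y + e) + ∑ i ∈ Finset.range t, u v i) ∉ D} ∪ {T}) < T then
          Aa P ξ D lam
            (T - sInf ({t | (T - t, (y + e) + ∑ i ∈ Finset.range t, u v i) ∉ D} ∪ {T}))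
            ((y + e) + ∑ i ∈ Finset.range
              (sInf ({t | (T - t, (y + e) + ∑ i ∈ Finset.range t, u v i) ∉ D} ∪ {T})), u v i)
        else Bb lam ((y + e) + ∑ i ∈ Finset.range
              (sInf ({t | (T - t, (y + e) + ∑ i ∈ Finset.range t, u v i) ∉ D} ∪ {T})), u v i)
        with hΦdef
      set g : Ω → (Fin T → ℤ) := fun ω i => shf η (k+1) i ω with hgdef
      have hsum : ∀ (e : ℤ) (ω : Ω), ∀ t ≤ T, (y + e) + ∑ i ∈ Finset.range t, u (g ω) i
          = walk (shf η (k+1)) (y + e) t ω := by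
        intro e ω t ht
        unfold walk
        congr 1
        apply Finset.sum_congr rfl
        intro i hi
        rw [Finset.mem_range] at hi
        simp only [hudef, hgdef]
        rw [dif_pos (lt_of_lt_of_le hi ht)]
      have hτΦ : ∀ (e : ℤ) (ω : Ω),
          sInf ({t | (T - t, (y + e) + ∑ i ∈ Finset.range t, u (g ω) i) ∉ D} ∪ {T})
          = revHitBy D (walk (shf η (k+1)) (y + e)) T ω := by
        intro e ω
        unfold revHitBy
        apply sInf_union_congr
        intro t ht
        simp only [Set.mem_setOf_eq]
        rw [hsum e ω t ht]
      have hkey : ∀ (e : ℤ) (ω : Ω), Φ e (g ω) = body (y + e) ω := by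
        intro e ω
        simp only [hΦdef, hbodydef]
        rw [hτΦ e ω, hsum e ω _ (revHitBy_le T)]
      have hgmeas : Measurable g := measurable_pi_lambda _ fun i => hηm _
      have hΦmeas : ∀ e, Measurable (Φ e) := fun e => measurable_of_countable _
      have hindep : IndepFun (η k) g P := by
        have hmeas : ∀ j : ℕ ⊕ ℕ, Measurable (Sum.elim ξ η j) := by
          rintro (n | n)
          · exact hξm n
          · exact hηm n
        have := indep_of_ne P ξ η hmeas hind (Sum.inr k) T
          (fun i => Sum.inr ((i : ℕ) + (k+1)))
          (fun i h => by have := Sum.inr.inj h; omega)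
        exact this
      have hae : ∀ᵐ ω ∂P, ∀ i, η i ω = 1 ∨ η i ω = -1 :=
        (ae_all_iff).mpr fun i => fairSign_ae (hηm i) (hηf i)
      have hintΦ : ∀ e, Integrable (fun ω => Φ e (g ω)) P := by
        intro e
        apply integrable_of_mem_finite P
          (((hΦmeas e).comp hgmeas).aestronglyMeasurable)
          (S := ((fun q : ℕ × ℤ => Aa P ξ D lam q.1 q.2) ''
              (Set.Iic T ×ˢ Set.Icc (y + e - T) (y + e + T)))
            ∪ ((fun z => Bb lam z) '' Set.Icc (y + e - T) (y + e + T)))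
          (Set.Finite.union
            (Set.Finite.image _ ((Set.finite_Iic T).prod (Set.finite_Icc _ _)))
            (Set.Finite.image _ (Set.finite_Icc _ _)))
        filter_upwards [hae] with ω hω
        show Φ e (g ω) ∈ _
        rw [hkey e ω]
        simp only [hbodydef]
        set τ := revHitBy D (walk (shf η (k+1)) (y + e)) T ω with hτd
        have hτle : τ ≤ T := revHitBy_le T
        have hwmem : walk (shf η (k+1)) (y + e) τ ω ∈ Set.Icc (y + e - T) (y + e + T) := by
          have hb := walk_bound (ξ := shf η (k+1)) (ω := ω)
            (fun i => hω (i + (k+1))) (y + e) τ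
          have habs := abs_le.mp hb
          rw [Set.mem_Icc]
          constructor <;> [omega; omega]
        by_cases hlt : τ < T
        · rw [if_pos hlt]
          left
          exact ⟨(T - τ, walk (shf η (k+1)) (y + e) τ ω),
            ⟨Set.mem_Iic.mpr (by omega), hwmem⟩, rfl⟩
        · rw [if_neg hlt]
          right
          exact ⟨walk (shf η (k+1)) (y + e) τ ω, hwmem, rfl⟩
      have e1 : Rr P ξ η D lam (T+1) k y = ∫ ω, Φ (η k ω) (g ω) ∂P := by
        unfold Rr
        apply integral_congr_ae (Eventually.of_forall fun ω => ?_)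
        rw [hbody ω, ← hkey (η k ω) ω]
      have e2 : ∀ (e : ℤ), (∫ ω, Φ e (g ω) ∂P) = Rr P ξ η D lam T (k+1) (y + e) := by
        intro e
        unfold Rr
        apply integral_congr_ae (Eventually.of_forall fun ω => ?_)
        rw [hkey e ω]
      rw [lapA hD hξm hηm hξf hind hInt T y hDy, e1,
        half_half P Φ (hηm k) (hηf k) hgmeas hΦmeas hindep hintΦ, e2 1, e2 (-1)]
      have hm1 : y + (-1 : ℤ) = y - 1 := by ring
      rw [hm1, ← ih (k+1) (y+1), ← ih (k+1) (y-1)]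
    · -- boundary case: the reversed walk stops immediately
      have hτ : ∀ ω : Ω, revHitBy D (walk (shf η k) y) (T+1) ω = 0 := by
        intro ω
        apply Nat.sInf_eq_zero.mpr
        left
        show (T + 1 - 0, walk (shf η k) y 0 ω) ∉ D ∨ (0:ℕ) ∈ ({T+1} : Set ℕ)
        left
        simpa [walk_zero] using hDy
      have hconst : ∀ ω : Ω, (if revHitBy D (walk (shf η k) y) (T+1) ω < T+1 then
            Aa P ξ D lam (T + 1 - revHitBy D (walk (shf η k) y) (T+1) ω)
              (walk (shf η k) y (revHitBy D (walk (shf η k) y) (T+1) ω) ω)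
          else Bb lam (walk (shf η k) y (revHitBy D (walk (shf η k) y) (T+1) ω) ω))
          = Aa P ξ D lam (T+1) y := by
        intro ω
        rw [hτ ω, if_pos (Nat.succ_pos T), walk_zero]
        norm_num
      have hR : Rr P ξ η D lam (T+1) k y = ∫ (_ : Ω), Aa P ξ D lam (T+1) y ∂P := by
        unfold Rr
        exact integral_congr_ae (Eventually.of_forall fun ω => hconst ω)
      rw [hR, integral_const]
      simp

end Main3

section Main4

open scoped Classical
open Filter

variable {Ω : Type*} [MeasurableSpace Ω]
variable {P : Measure Ω} [IsProbabilityMeasure P] {ξ η : ℕ → Ω → ℤ}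
variable {D : Set (ℕ × ℤ)} {lam : Measure ℤ} [IsProbabilityMeasure lam]

lemma tendsto_fT_ae (hfin : ∀ᵐ p ∂(lam.prod P), ∃ t, (t, walk ξ p.1 t p.2) ∉ D) :
    ∀ᵐ p ∂(lam.prod P),
      Tendsto (fun n => ((fT ξ D n p : ℤ) : ℝ)) atTop (nhds ((fI ξ D p : ℤ) : ℝ)) := by
  filter_upwards [hfin] with p hp
  have hev : ∀ n ≥ hit D (walk ξ p.1) p.2, ((fT ξ D n p : ℤ) : ℝ) = ((fI ξ D p : ℤ) : ℝ) := by
    intro n hn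
    unfold fT fI
    rw [hitBy_eq_hit hp hn]
  exact Tendsto.congr'
    (eventually_atTop.mpr ⟨hit D (walk ξ p.1) p.2, fun n hn => (hev n hn).symm⟩)
    tendsto_const_nhds

lemma memLp_fI (hξm : ∀ n, Measurable (ξ n))
    (hfin : ∀ᵐ p ∂(lam.prod P), ∃ t, (t, walk ξ p.1 t p.2) ∉ D)
    (hUI : UniformIntegrable
      (fun (t : ℕ) (p : ℤ × Ω) => ((walk ξ p.1 (hitBy D (walk ξ p.1) t p.2) p.2 : ℤ) : ℝ))
      1 (lam.prod P)) :
    MemLp (fun p => ((fI ξ D p : ℤ) : ℝ)) 1 (lam.prod P) := by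
  obtain ⟨C, hC⟩ := hUI.2.2
  have hmeas : Measurable fun p : ℤ × Ω => ((fI ξ D p : ℤ) : ℝ) :=
    (measurable_of_countable _).comp (mfI hξm)
  refine ⟨hmeas.aestronglyMeasurable, ?_⟩
  rw [eLpNorm_one_eq_lintegral_enorm]
  simp only [enorm_eq_nnnorm]
  have hle1 : ∫⁻ p, ‖((fI ξ D p : ℤ) : ℝ)‖₊ ∂(lam.prod P)
      = ∫⁻ p, liminf (fun n => (‖((fT ξ D n p : ℤ) : ℝ)‖₊ : ENNReal)) atTop ∂(lam.prod P) := by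
    apply lintegral_congr_ae
    filter_upwards [tendsto_fT_ae hfin] with p hp
    exact ((ENNReal.tendsto_coe.mpr hp.nnnorm).liminf_eq).symm
  rw [hle1]
  have hle2 : ∫⁻ p, liminf (fun n => (‖((fT ξ D n p : ℤ) : ℝ)‖₊ : ENNReal)) atTop ∂(lam.prod P)
      ≤ liminf (fun n => ∫⁻ p, (‖((fT ξ D n p : ℤ) : ℝ)‖₊ : ENNReal) ∂(lam.prod P)) atTop :=
    lintegral_liminf_le' fun n =>
      (measurable_coe_nnreal_ennreal.comp
        ((measurable_of_countable _).comp (mfT hξm n)).nnnorm).aemeasurable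
  have hle3 : liminf (fun n => ∫⁻ p, (‖((fT ξ D n p : ℤ) : ℝ)‖₊ : ENNReal) ∂(lam.prod P)) atTop
      ≤ (C : ENNReal) := by
    have hCn : ∀ n, ∫⁻ p, (‖((fT ξ D n p : ℤ) : ℝ)‖₊ : ENNReal) ∂(lam.prod P) ≤ (C : ENNReal) := by
      intro n
      have := hC n
      rwa [eLpNorm_one_eq_lintegral_enorm] at this
    calc liminf (fun n => ∫⁻ p, (‖((fT ξ D n p : ℤ) : ℝ)‖₊ : ENNReal) ∂(lam.prod P)) atTop
        ≤ liminf (fun _ => (C : ENNReal)) atTop :=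
          Filter.liminf_le_liminf (Eventually.of_forall hCn)
      _ = (C : ENNReal) := Filter.liminf_const _
  exact lt_of_le_of_lt (le_trans hle2 hle3) ENNReal.coe_lt_top

lemma int_fI (hξm : ∀ n, Measurable (ξ n))
    (hfin : ∀ᵐ p ∂(lam.prod P), ∃ t, (t, walk ξ p.1 t p.2) ∉ D)
    (hUI : UniformIntegrable
      (fun (t : ℕ) (p : ℤ × Ω) => ((walk ξ p.1 (hitBy D (walk ξ p.1) t p.2) p.2 : ℤ) : ℝ))
      1 (lam.prod P)) :
    Integrable (fun p => ((fI ξ D p : ℤ) : ℝ)) (lam.prod P) :=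
  memLp_one_iff_integrable.mp (memLp_fI hξm hfin hUI)

lemma int_fI_abs (hξm : ∀ n, Measurable (ξ n))
    (hfin : ∀ᵐ p ∂(lam.prod P), ∃ t, (t, walk ξ p.1 t p.2) ∉ D)
    (hUI : UniformIntegrable
      (fun (t : ℕ) (p : ℤ × Ω) => ((walk ξ p.1 (hitBy D (walk ξ p.1) t p.2) p.2 : ℤ) : ℝ))
      1 (lam.prod P)) (z : ℤ) :
    Integrable (fun p => ((|fI ξ D p - z| : ℤ) : ℝ)) (lam.prod P) := by
  have h2 := ((int_fI hξm hfin hUI).sub (integrable_const ((z : ℤ) : ℝ))).abs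
  exact h2.congr (Eventually.of_forall fun p => by simp only [Pi.sub_apply]; push_cast; ring)

lemma tendsto_Aa (hξm : ∀ n, Measurable (ξ n))
    (hfin : ∀ᵐ p ∂(lam.prod P), ∃ t, (t, walk ξ p.1 t p.2) ∉ D)
    (hUI : UniformIntegrable
      (fun (t : ℕ) (p : ℤ × Ω) => ((walk ξ p.1 (hitBy D (walk ξ p.1) t p.2) p.2 : ℤ) : ℝ))
      1 (lam.prod P)) (z : ℤ) :
    Tendsto (fun n => Aa P ξ D lam n z) atTop (nhds (AI P ξ D lam z)) := by
  have hvit : Tendsto (fun n => eLpNorm ((fun p => ((fT ξ D n p : ℤ) : ℝ))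
      - (fun p => ((fI ξ D p : ℤ) : ℝ))) 1 (lam.prod P)) atTop (nhds 0) := by
    apply tendsto_Lp_finite_of_tendstoInMeasure le_rfl ENNReal.one_ne_top hUI.1
      (memLp_fI hξm hfin hUI) hUI.2.1
    exact tendstoInMeasure_of_tendsto_ae hUI.1 (tendsto_fT_ae hfin)
  have hb : ∀ n, |Aa P ξ D lam n z - AI P ξ D lam z|
      ≤ (eLpNorm ((fun p => ((fT ξ D n p : ℤ) : ℝ)) - (fun p => ((fI ξ D p : ℤ) : ℝ))) 1
          (lam.prod P)).toReal := by
    intro n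
    have hint_n := int_fT_abs hUI n z
    have hint_I := int_fI_abs hξm hfin hUI z
    have hdiff : Integrable (fun p => ((fT ξ D n p : ℤ) : ℝ) - ((fI ξ D p : ℤ) : ℝ))
        (lam.prod P) := (int_fT hUI n).sub (int_fI hξm hfin hUI)
    have hdiffabs : Integrable (fun p => |((fT ξ D n p : ℤ) : ℝ) - ((fI ξ D p : ℤ) : ℝ)|)
        (lam.prod P) := hdiff.abs
    have hsub : Aa P ξ D lam n z - AI P ξ D lam z
        = ∫ p, (((|fT ξ D n p - z| : ℤ) : ℝ) - ((|fI ξ D p - z| : ℤ) : ℝ)) ∂(lam.prod P) :=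
      (integral_sub hint_n hint_I).symm
    rw [hsub]
    have h1 : |∫ p, (((|fT ξ D n p - z| : ℤ) : ℝ) - ((|fI ξ D p - z| : ℤ) : ℝ)) ∂(lam.prod P)|
        ≤ ∫ p, |((|fT ξ D n p - z| : ℤ) : ℝ) - ((|fI ξ D p - z| : ℤ) : ℝ)| ∂(lam.prod P) := by
      have := norm_integral_le_integral_norm
        (f := fun p => (((|fT ξ D n p - z| : ℤ) : ℝ) - ((|fI ξ D p - z| : ℤ) : ℝ)))
        (μ := lam.prod P)
      simpa [Real.norm_eq_abs] using this
    have h2 : ∫ p, |((|fT ξ D n p - z| : ℤ) : ℝ) - ((|fI ξ D p - z| : ℤ) : ℝ)| ∂(lam.prod P)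
        ≤ ∫ p, |((fT ξ D n p : ℤ) : ℝ) - ((fI ξ D p : ℤ) : ℝ)| ∂(lam.prod P) := by
      apply integral_mono ((hint_n.sub hint_I).abs.congr
        (Eventually.of_forall fun p => by simp [Pi.sub_apply])) hdiffabs
      intro p
      simp only []
      exact_mod_cast abs_abs_sub_abs_le (fT ξ D n p) (fI ξ D p) z
    have h3 : ∫ p, |((fT ξ D n p : ℤ) : ℝ) - ((fI ξ D p : ℤ) : ℝ)| ∂(lam.prod P)
        = (eLpNorm ((fun p => ((fT ξ D n p : ℤ) : ℝ)) - (fun p => ((fI ξ D p : ℤ) : ℝ))) 1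
            (lam.prod P)).toReal := by
      have hdiff' : Integrable ((fun p => ((fT ξ D n p : ℤ) : ℝ))
          - (fun p => ((fI ξ D p : ℤ) : ℝ))) (lam.prod P) := hdiff
      rw [eLpNorm_one_eq_lintegral_enorm, ← ofReal_integral_norm_eq_lintegral_enorm hdiff',
        ENNReal.toReal_ofReal (integral_nonneg fun p => norm_nonneg _)]
      apply integral_congr_ae (Eventually.of_forall fun p => ?_)
      simp [Pi.sub_apply, Real.norm_eq_abs]
    linarith [h1, h2, le_of_eq h3]
  have hbt : Tendsto (fun n => (eLpNorm ((fun p => ((fT ξ D n p : ℤ) : ℝ))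
      - (fun p => ((fI ξ D p : ℤ) : ℝ))) 1 (lam.prod P)).toReal) atTop (nhds 0) := by
    have := (ENNReal.tendsto_toReal (by simp : (0:ENNReal) ≠ ⊤)).comp hvit
    exact this
  rw [tendsto_iff_dist_tendsto_zero]
  apply squeeze_zero (fun n => dist_nonneg) (fun n => ?_) hbt
  rw [Real.dist_eq]
  exact hb n

lemma aconst (hD : IsRootCont D) (hξm : ∀ n, Measurable (ξ n)) (hηm : ∀ n, Measurable (η n))
    (hξf : ∀ n, FairSign P (ξ n))
    (hind : iIndepFun (Sum.elim ξ η) P)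
    (hfin : ∀ᵐ p ∂(lam.prod P), ∃ t, (t, walk ξ p.1 t p.2) ∉ D)
    (hUI : UniformIntegrable
      (fun (t : ℕ) (p : ℤ × Ω) => ((walk ξ p.1 (hitBy D (walk ξ p.1) t p.2) p.2 : ℤ) : ℝ))
      1 (lam.prod P))
    (r : ℕ) (z : ℤ) (hrz : (r, z) ∉ D) :
    Aa P ξ D lam r z = AI P ξ D lam z := by
  have hInt : ∀ T y, Integrable (fun p => ((|fT ξ D T p - y| : ℤ) : ℝ)) (lam.prod P) :=
    fun T y => int_fT_abs hUI T y
  have hCzero : ∀ s, r ≤ s → Cc P ξ D lam s z = 0 := by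
    intro s hs
    unfold Cc
    have hzero : ∀ p : ℤ × Ω,
        (if stay ξ D s p ∧ walk ξ p.1 s p.2 = z then (1:ℝ) else 0) = 0 := by
      intro p
      rw [if_neg]
      rintro ⟨hstay, hwz⟩
      have hmem : (s, z) ∈ D := by
        have := hstay s le_rfl
        rwa [hwz] at this
      rcases eq_or_lt_of_le hs with req | rlt
      · exact hrz (req ▸ hmem)
      · exact hrz (hD s z hmem r rlt)
    rw [integral_congr_ae (Eventually.of_forall hzero), integral_zero]
  have hconst : ∀ s, r ≤ s → Aa P ξ D lam s z = Aa P ξ D lam r z := by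
    intro s hs
    induction s, hs using Nat.le_induction with
    | base => rfl
    | succ s hs ihs =>
      rw [stepA hξm hηm hξf hind hInt s z, hCzero s hs, add_zero, ihs]
  have h1 : Tendsto (fun n => Aa P ξ D lam n z) atTop (nhds (Aa P ξ D lam r z)) :=
    Tendsto.congr' (eventually_atTop.mpr ⟨r, fun n hn => (hconst n hn).symm⟩)
      tendsto_const_nhds
  exact tendsto_nhds_unique h1 (tendsto_Aa hξm hfin hUI z)

lemma potential_eq_neg_integral {m : Measure ℤ} {z : ℤ}
    (hm : Integrable (fun w : ℤ => ((|z - w| : ℤ) : ℝ)) m) :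
    potential m z = -∫ w, ((|z - w| : ℤ) : ℝ) ∂m := by
  unfold potential
  rw [integral_countable hm]
  congr 1
  apply tsum_congr
  intro w
  rw [smul_eq_mul, mul_comm]
  rfl

end Main4
/-- for every `y ∈ ℤ`,
`U_{μ^{Root}_T}(y) = E_y[U_{μ^{Root}}(Y_{τ*}) 1_{τ* < T} + U_λ(Y_{τ*}) 1_{τ* = T}]`. -/
theorem root_optimal_stopping_value
    (P : Measure Ω) [IsProbabilityMeasure P] (ξ η : ℕ → Ω → ℤ)
    (h : IndepSSRWIncrements P ξ η)
    (D : Set (ℕ × ℤ)) (hD : IsRootCont D)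
    (lam : Measure ℤ) [IsProbabilityMeasure lam] (hlam : FiniteFirstMoment lam)
    (T : ℕ)
    (hfin : ∀ᵐ p ∂(lam.prod P), ∃ t, (t, walk ξ p.1 t p.2) ∉ D)
    (hUI : UniformIntegrable
      (fun (t : ℕ) (p : ℤ × Ω) => ((walk ξ p.1 (hitBy D (walk ξ p.1) t p.2) p.2 : ℤ) : ℝ))
      1 (lam.prod P))
    (y : ℤ) :
    potential (muRootT P ξ D lam T) y
      = ∫ ω,
          ((if revHitBy D (walk η y) T ω < T then
              potential (muRoot P ξ D lam) (walk η y (revHitBy D (walk η y) T ω) ω)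
            else 0)
          + (if revHitBy D (walk η y) T ω = T then
              potential lam (walk η y (revHitBy D (walk η y) T ω) ω)
            else 0)) ∂P := by
  classical
  obtain ⟨hξm, hηm, hξf, hηf, hind⟩ := h
  have hInt : ∀ T' y', Integrable (fun p => ((|fT ξ D T' p - y'| : ℤ) : ℝ)) (lam.prod P) :=
    fun T' y' => int_fT_abs hUI T' y'
  have hmT : Measurable (fT ξ D T) := mfT hξm T
  have hintcomp : Integrable (fun p => ((|y - fT ξ D T p| : ℤ) : ℝ)) (lam.prod P) :=
    (hInt T y).congr (Filter.Eventually.of_forall fun p => by simp only [abs_sub_comm])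
  have hintT : Integrable (fun w : ℤ => ((|y - w| : ℤ) : ℝ)) (muRootT P ξ D lam T) := by
    have hmapeq : muRootT P ξ D lam T = Measure.map (fT ξ D T) (lam.prod P) := rfl
    rw [hmapeq]
    exact (integrable_map_measure (measurable_of_countable _).aestronglyMeasurable
      hmT.aemeasurable).mpr hintcomp
  have hLHS : potential (muRootT P ξ D lam T) y = -Aa P ξ D lam T y := by
    rw [potential_eq_neg_integral hintT]
    have hmapeq : muRootT P ξ D lam T = Measure.map (fT ξ D T) (lam.prod P) := rfl
    rw [hmapeq, integral_map hmT.aemeasurable (measurable_of_countable _).aestronglyMeasurable]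
    unfold Aa
    congr 1
    apply integral_congr_ae (Filter.Eventually.of_forall fun p => ?_)
    simp only [abs_sub_comm]
  have hmI : Measurable (fI ξ D) := mfI hξm
  have hpotI : ∀ z : ℤ, potential (muRoot P ξ D lam) z = -AI P ξ D lam z := by
    intro z
    have hintcompI : Integrable (fun p => ((|z - fI ξ D p| : ℤ) : ℝ)) (lam.prod P) :=
      (int_fI_abs hξm hfin hUI z).congr (Filter.Eventually.of_forall fun p => by
        simp only [abs_sub_comm])
    have hmapeq : muRoot P ξ D lam = Measure.map (fI ξ D) (lam.prod P) := rfl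
    have hintI : Integrable (fun w : ℤ => ((|z - w| : ℤ) : ℝ)) (muRoot P ξ D lam) := by
      rw [hmapeq]
      exact (integrable_map_measure (measurable_of_countable _).aestronglyMeasurable
        hmI.aemeasurable).mpr hintcompI
    rw [potential_eq_neg_integral hintI]
    rw [hmapeq, integral_map hmI.aemeasurable (measurable_of_countable _).aestronglyMeasurable]
    unfold AI
    congr 1
    apply integral_congr_ae (Filter.Eventually.of_forall fun p => ?_)
    simp only [abs_sub_comm]
  have hpotlam : ∀ z : ℤ, potential lam z = -Bb lam z := by
    intro z
    have hintl : Integrable (fun w : ℤ => ((|z - w| : ℤ) : ℝ)) lam := by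
      have h2 := ((integrable_const ((z : ℤ) : ℝ)).sub hlam).abs
      exact h2.congr (Filter.Eventually.of_forall fun w => by
        simp only [Pi.sub_apply]; push_cast; ring)
    rw [potential_eq_neg_integral hintl]
    unfold Bb
    congr 1
    apply integral_congr_ae (Filter.Eventually.of_forall fun w => ?_)
    simp only [abs_sub_comm]
  have hRHS : (∫ ω,
          ((if revHitBy D (walk η y) T ω < T then
              potential (muRoot P ξ D lam) (walk η y (revHitBy D (walk η y) T ω) ω)
            else 0)
          + (if revHitBy D (walk η y) T ω = T then
              potential lam (walk η y (revHitBy D (walk η y) T ω) ω)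
            else 0)) ∂P)
      = -Rr P ξ η D lam T 0 y := by
    unfold Rr
    rw [← integral_neg]
    apply integral_congr_ae (Filter.Eventually.of_forall fun ω => ?_)
    have hshf : walk (shf η 0) y = walk η y := rfl
    rw [hshf]
    set τ := revHitBy D (walk η y) T ω with hτdef
    have hτle : τ ≤ T := revHitBy_le T
    rcases lt_or_eq_of_le hτle with hlt | heq
    · rw [if_pos hlt, if_pos hlt, if_neg (by omega : ¬ τ = T), add_zero, hpotI]
      have hnm : (T - τ, walk η y τ ω) ∉ D := revHitBy_not_mem hlt
      rw [← aconst hD hξm hηm hξf hind hfin hUI (T - τ) _ hnm]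
    · rw [if_neg (by omega : ¬ τ < T), if_neg (by omega : ¬ τ < T), if_pos heq, zero_add,
        hpotlam]
  rw [hLHS, hRHS, coreT hD hξm hηm hξf hηf hind hInt T 0 y]

end SwitchingIdentities
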